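/- arXiv:1610.00341 — 2 statements merged into one kernel-verified Lean document; each statement's English description precedes it below -/
import Mathlib

section
/- Let P be a lattice (d,k)-polytope, let j ∈ {1,…,d}, and let l_j = min{x_j : x ∈ P} and h_j = max{x_j : x ∈ P}. Let L_j = P ∩ {x ∈ ℝ^d : x_j = l_j} and H_j = P ∩ {x ∈ ℝ^d : x_j = h_j}. Then the diameter of the graph of P satisfies δ(P) ≤ max{δ(L_j), δ(H_j)} + h_j − l_j. -/
open scoped BigOperators

/-- A lattice `(d,k)`-polytope: the convex hull in `ℝ^d` of a finite set of points
all of whose coordinates are integers between `0` and `k`. -/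
def IsLatticePolytope (d k : ℕ) (P : Set (Fin d → ℝ)) : Prop :=
  ∃ V : Finset (Fin d → ℝ),
    (∀ v ∈ V, ∀ i : Fin d, ∃ n : ℕ, n ≤ k ∧ v i = n) ∧
    P = convexHull ℝ (V : Set (Fin d → ℝ))

/-- The graph of a polytope `P`: its nodes are the vertices (extreme points) of `P`,
and `u`, `v` are adjacent when the segment `[u,v]` is a `1`-dimensional face
(an extreme subset) of `P`. -/
def polytopeGraph {d : ℕ} (P : Set (Fin d → ℝ)) : SimpleGraph (Fin d → ℝ) where
  Adj u v := u ≠ v ∧ u ∈ P.extremePoints ℝ ∧ v ∈ P.extremePoints ℝ ∧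
    IsExtreme ℝ P (segment ℝ u v)
  symm := by
    constructor
    rintro u v ⟨h1, h2, h3, h4⟩
    exact ⟨h1.symm, h3, h2, by rwa [segment_symm]⟩
  loopless := by constructor; rintro u ⟨h1, -⟩; exact h1 rfl

/-- The diameter `δ(P)` of the graph of a polytope `P`. -/
noncomputable def polyDiam {d : ℕ} (P : Set (Fin d → ℝ)) : ℕ :=
  sSup { n : ℕ | ∃ u ∈ P.extremePoints ℝ, ∃ v ∈ P.extremePoints ℝ,
    (polytopeGraph P).dist u v = n }

/-- The distance `d(u,F)` from a vertex `u` of `P` to a face `F` of `P`: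
the minimum over the vertices `v` of `F` of the graph distance `d(u,v)`. -/
noncomputable def distToFace {d : ℕ} (P : Set (Fin d → ℝ)) (u : Fin d → ℝ)
    (F : Set (Fin d → ℝ)) : ℕ :=
  sInf { n : ℕ | ∃ v ∈ F.extremePoints ℝ, (polytopeGraph P).dist u v = n }

/-- `δ(d,k)`: the largest possible diameter of the graph of a lattice `(d,k)`-polytope. -/
noncomputable def latticeDiam (d k : ℕ) : ℕ :=
  sSup { n : ℕ | ∃ P : Set (Fin d → ℝ), IsLatticePolytope d k P ∧ polyDiam P = n }



section Helpers
variable {d : ℕ}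

-- 1. upper bound on hull
lemma hull_le (V : Finset (Fin d → ℝ)) (f : (Fin d → ℝ) →L[ℝ] ℝ) (c : ℝ)
    (h : ∀ w ∈ V, f w ≤ c) : ∀ x ∈ convexHull ℝ (V : Set (Fin d → ℝ)), f x ≤ c := by
  intro x hx
  have : convexHull ℝ (V : Set (Fin d → ℝ)) ⊆ {x | f x ≤ c} :=
    convexHull_min (fun w hw => h w hw) (convex_halfSpace_le (f.toLinearMap.isLinear) c)
  exact this hx

-- 2. max set is extreme
lemma isExtreme_eq_max (P : Set (Fin d → ℝ)) (f : (Fin d → ℝ) →L[ℝ] ℝ) (c : ℝ)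
    (hc : ∀ x ∈ P, f x ≤ c) : IsExtreme ℝ P {x ∈ P | f x = c} := by
  constructor
  · exact fun x hx => hx.1
  · rintro x1 hx1 x2 hx2 x ⟨hxP, hxc⟩ hseg
    obtain ⟨a, b, ha, hb, hab, hx⟩ := hseg
    have h1 : f x1 ≤ c := hc _ hx1
    have h2 : f x2 ≤ c := hc _ hx2
    have hfx : a * f x1 + b * f x2 = c := by
      rw [← hxc, ← hx]; simp [map_add, map_smul]
    have hsum : a * c + b * c = c := by rw [← add_mul, hab, one_mul]
    have e1 : f x1 = c := by
      by_contra hne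
      have h1' : a * f x1 < a * c := mul_lt_mul_of_pos_left (h1.lt_of_ne hne) ha
      have h2' : b * f x2 ≤ b * c := mul_le_mul_of_nonneg_left h2 hb.le
      linarith
    have e2 : f x2 = c := by
      by_contra hne
      have h2' : b * f x2 < b * c := mul_lt_mul_of_pos_left (h2.lt_of_ne hne) hb
      have h1' : a * f x1 ≤ a * c := mul_le_mul_of_nonneg_left h1 ha.le
      linarith
    exact ⟨hx1, e1⟩

-- 3. the max face of a hull is the hull of the maximizers
lemma face_hull (V : Finset (Fin d → ℝ)) (f : (Fin d → ℝ) →L[ℝ] ℝ) (c : ℝ)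
    (h : ∀ w ∈ V, f w ≤ c) :
    {x ∈ convexHull ℝ (V : Set (Fin d → ℝ)) | f x = c}
      = convexHull ℝ ((V : Set (Fin d → ℝ)) ∩ {w | f w = c}) := by
  classical
  apply Set.Subset.antisymm
  · rintro x ⟨hxP, hxc⟩
    rw [Finset.convexHull_eq] at hxP
    obtain ⟨lam, hlam0, hlam1, hlamx⟩ := hxP
    rw [Finset.centerMass_eq_of_sum_1 _ _ hlam1] at hlamx
    simp only [id] at hlamx
    have hfx : ∑ y ∈ V, lam y * f y = c := by
      rw [← hxc, ← hlamx, map_sum]; simp [map_smul]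
    have hsumz : ∑ y ∈ V, lam y * (c - f y) = 0 := by
      have e : ∀ y ∈ V, lam y * (c - f y) = lam y * c - lam y * f y :=
        fun y _ => mul_sub _ _ _
      rw [Finset.sum_congr rfl e, Finset.sum_sub_distrib, ← Finset.sum_mul, hlam1,
        one_mul, hfx, sub_self]
    have hzero : ∀ y ∈ V, lam y * (c - f y) = 0 :=
      (Finset.sum_eq_zero_iff_of_nonneg
        (fun y hy => mul_nonneg (hlam0 y hy) (by linarith [h y hy]))).1 hsumz
    set V' := V.filter (fun w => f w = c) with hV'
    have hsub : ∀ y ∈ V, y ∉ V' → lam y = 0 := by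
      intro y hy hy'
      have hne : f y ≠ c := by simp [hV', Finset.mem_filter, hy] at hy'; exact hy'
      rcases mul_eq_zero.1 (hzero y hy) with h0 | h0
      · exact h0
      · exact absurd (by linarith : f y = c) hne
    have hsum' : ∑ y ∈ V', lam y = 1 := by
      rw [← hlam1]
      exact Finset.sum_subset (Finset.filter_subset _ _) hsub
    have hx' : x ∈ convexHull ℝ (V' : Set (Fin d → ℝ)) := by
      rw [Finset.convexHull_eq]
      refine ⟨lam, fun y hy => hlam0 y (Finset.filter_subset _ _ hy), hsum', ?_⟩
      rw [Finset.centerMass_eq_of_sum_1 _ _ hsum']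
      simp only [id]
      rw [← hlamx]
      exact Finset.sum_subset (Finset.filter_subset _ _)
        (fun y hy hy' => by rw [hsub y hy hy', zero_smul])
    have hVeq : (V' : Set (Fin d → ℝ)) = (V : Set (Fin d → ℝ)) ∩ {w | f w = c} := by
      ext y; simp [hV', Finset.mem_filter]
    rwa [hVeq] at hx'
  · intro x hx
    refine ⟨convexHull_mono Set.inter_subset_left hx, ?_⟩
    have h1 : f x ≤ c :=
      hull_le V f c h x (convexHull_mono Set.inter_subset_left hx)
    have h2 : c ≤ f x := by
      have hsub : convexHull ℝ ((V : Set (Fin d → ℝ)) ∩ {w | f w = c}) ⊆ {y | c ≤ f y} :=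
        convexHull_min (fun w hw => le_of_eq hw.2.symm)
          (convex_halfSpace_ge (f.toLinearMap.isLinear) c)
      exact hsub hx
    exact le_antisymm h1 h2

-- 4a. a functional not vanishing on a finite set of nonzero vectors
lemma exists_nonvanishing (Z : Finset (Fin d → ℝ)) (hZ : ∀ z ∈ Z, z ≠ 0) :
    ∃ ψ : (Fin d → ℝ) →L[ℝ] ℝ, ∀ z ∈ Z, ψ z ≠ 0 := by
  classical
  induction Z using Finset.induction_on with
  | empty => exact ⟨0, by simp⟩
  | @insert z0 Z' hz0 ih =>
    obtain ⟨ψ, hψ⟩ := ih (fun z hz => hZ z (Finset.mem_insert_of_mem hz))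
    have hz0ne : z0 ≠ 0 := hZ z0 (Finset.mem_insert_self _ _)
    obtain ⟨i, hi⟩ : ∃ i, z0 i ≠ 0 := by
      by_contra hcon; push_neg at hcon
      exact hz0ne (funext hcon)
    set φ0 : (Fin d → ℝ) →L[ℝ] ℝ := ContinuousLinearMap.proj i with hφ0
    have hφ0z0 : φ0 z0 ≠ 0 := by simpa [hφ0] using hi
    set bad : Finset ℝ := (insert z0 Z').image (fun z => -ψ z / φ0 z) with hbad
    obtain ⟨t, ht⟩ := Infinite.exists_notMem_finset bad
    refine ⟨ψ + t • φ0, ?_⟩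
    intro z hz
    by_cases hφz : φ0 z = 0
    · have hz' : z ∈ Z' := by
        rcases Finset.mem_insert.1 hz with rfl | hz' <;> [exact absurd hφz hφ0z0; exact hz']
      simp only [ContinuousLinearMap.add_apply, ContinuousLinearMap.smul_apply, hφz,
        smul_eq_mul, mul_zero, add_zero]
      exact hψ z hz'
    · intro hcon
      apply ht
      have hteq : t = -ψ z / φ0 z := by
        simp only [ContinuousLinearMap.add_apply, ContinuousLinearMap.smul_apply,
          smul_eq_mul] at hcon
        field_simp
        linarith
      rw [hbad]
      exact Finset.mem_image.2 ⟨z, hz, hteq.symm⟩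

-- 4b. generic separating functional
lemma exists_generic (u : Fin d → ℝ) (W : Finset (Fin d → ℝ))
    (hW : u ∉ convexHull ℝ (W : Set (Fin d → ℝ)))
    (Z : Finset (Fin d → ℝ)) (hZ : ∀ z ∈ Z, z ≠ 0) :
    ∃ g : (Fin d → ℝ) →L[ℝ] ℝ, (∀ w ∈ W, g w < g u) ∧ (∀ z ∈ Z, g z ≠ 0) := by
  classical
  obtain ⟨ψ, hψ⟩ := exists_nonvanishing Z hZ
  rcases W.eq_empty_or_nonempty with rfl | hWne
  · exact ⟨ψ, by simp, hψ⟩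
  obtain ⟨g0, c, hg0W, hg0u⟩ :=
    geometric_hahn_banach_closed_point (convex_convexHull ℝ _)
      (W.finite_toSet.isClosed_convexHull (𝕜 := ℝ)) hW
  have hg0 : ∀ w ∈ W, g0 w < g0 u := fun w hw =>
    lt_trans (hg0W w (subset_convexHull ℝ _ hw)) hg0u
  set δ : ℝ := W.inf' hWne (fun w => g0 u - g0 w) with hδ
  have hδpos : 0 < δ := by
    rw [hδ, Finset.lt_inf'_iff]
    intro w hw; linarith [hg0 w hw]
  set M : ℝ := W.sup' hWne (fun w => |ψ u - ψ w|) + 1 with hM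
  have hMpos : 0 < M := by
    rw [hM]
    have : (0:ℝ) ≤ W.sup' hWne (fun w => |ψ u - ψ w|) := by
      obtain ⟨w, hw⟩ := hWne
      exact le_trans (abs_nonneg (ψ u - ψ w)) (Finset.le_sup' (fun w => |ψ u - ψ w|) hw)
    linarith
  have hioo : (Set.Ioo (0:ℝ) (δ / M)).Infinite :=
    Set.Ioo_infinite (by positivity)
  set bad : Finset ℝ := Z.image (fun z => -g0 z / ψ z) with hbad
  obtain ⟨ε, hεmem, hεbad⟩ := hioo.exists_notMem_finset bad
  obtain ⟨hε0, hεδ⟩ := hεmem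
  refine ⟨g0 + ε • ψ, ?_, ?_⟩
  · intro w hw
    have h1 : δ ≤ g0 u - g0 w := Finset.inf'_le _ hw
    have h2 : |ψ u - ψ w| ≤ M - 1 := by
      have := Finset.le_sup' (fun w => |ψ u - ψ w|) hw
      rw [hM]; linarith
    have h3 : ε * M < δ := by
      rw [lt_div_iff₀ hMpos] at hεδ; linarith
    simp only [ContinuousLinearMap.add_apply, ContinuousLinearMap.smul_apply, smul_eq_mul]
    nlinarith [abs_le.1 h2]
  · intro z hz hcon
    apply hεbad
    have hψz := hψ z hz
    have : ε = -g0 z / ψ z := by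
      simp only [ContinuousLinearMap.add_apply, ContinuousLinearMap.smul_apply,
        smul_eq_mul] at hcon
      field_simp
      linarith
    rw [hbad]
    exact Finset.mem_image.2 ⟨z, hz, this.symm⟩

-- 5. improving edge lemma
set_option maxHeartbeats 2000000 in
lemma improving_edge (V : Finset (Fin d → ℝ)) (u : Fin d → ℝ)
    (hu : u ∈ (convexHull ℝ (V : Set (Fin d → ℝ))).extremePoints ℝ)
    (f : (Fin d → ℝ) →L[ℝ] ℝ) (hex : ∃ w ∈ V, f w < f u) :
    ∃ v, v ∈ (convexHull ℝ (V : Set (Fin d → ℝ))).extremePoints ℝ ∧ v ≠ u ∧ f v < f u ∧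
      IsExtreme ℝ (convexHull ℝ (V : Set (Fin d → ℝ))) (segment ℝ u v) := by
  classical
  set P := convexHull ℝ (V : Set (Fin d → ℝ)) with hP
  have huV : u ∈ V := by exact_mod_cast extremePoints_convexHull_subset hu
  have hunot : u ∉ convexHull ℝ ((V.erase u : Finset (Fin d → ℝ)) : Set (Fin d → ℝ)) := by
    intro hcon
    have hsub : convexHull ℝ ((V.erase u : Finset (Fin d → ℝ)) : Set (Fin d → ℝ)) ⊆ P :=
      convexHull_mono (by exact_mod_cast Finset.erase_subset _ _)
    have hEP : u ∈ (convexHull ℝ ((V.erase u : Finset (Fin d → ℝ)) :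
        Set (Fin d → ℝ))).extremePoints ℝ :=
      inter_extremePoints_subset_extremePoints_of_subset hsub ⟨hcon, hu⟩
    have : u ∈ V.erase u := by exact_mod_cast extremePoints_convexHull_subset hEP
    exact (Finset.notMem_erase u V) this
  set B := (V.erase u).filter (fun w => f w < f u) with hB
  have hBne : B.Nonempty := by
    obtain ⟨w, hwV, hwf⟩ := hex
    refine ⟨w, Finset.mem_filter.2 ⟨Finset.mem_erase.2 ⟨?_, hwV⟩, hwf⟩⟩
    rintro rfl; exact lt_irrefl _ hwf
  have hBfu : ∀ w ∈ B, f w < f u := fun w hw => (Finset.mem_filter.1 hw).2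
  have hBV : B ⊆ V.erase u := Finset.filter_subset _ _
  set ζ : (Fin d → ℝ) × (Fin d → ℝ) → (Fin d → ℝ) :=
    fun p => (f p.1 - f p.2) • u - (f u - f p.2) • p.1 + (f u - f p.1) • p.2 with hζ
  set Z := ((B ×ˢ B).image ζ).filter (fun z => z ≠ 0) with hZ
  obtain ⟨g, hgW, hgZ⟩ := exists_generic u (V.erase u) hunot Z
    (fun z hz => (Finset.mem_filter.1 hz).2)
  have hgB : ∀ w ∈ B, g w < g u := fun w hw => hgW w (hBV hw)
  set s : (Fin d → ℝ) → ℝ := fun w => (g u - g w) / (f u - f w) with hs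
  have hden : ∀ w ∈ B, 0 < f u - f w := fun w hw => by linarith [hBfu w hw]
  have hspos : ∀ w ∈ B, 0 < s w := fun w hw =>
    div_pos (by linarith [hgB w hw]) (hden w hw)
  have hsmul : ∀ w ∈ B, g u - g w = s w * (f u - f w) := by
    intro w hw
    rw [hs]
    field_simp [ne_of_gt (hden w hw)]
  set sstar := B.inf' hBne s with hsstar
  obtain ⟨v0, hv0B, hv0eq⟩ := B.exists_mem_eq_inf' hBne s
  set A := B.filter (fun w => s w = sstar) with hA
  have hAne : A.Nonempty := ⟨v0, Finset.mem_filter.2 ⟨hv0B, hv0eq.symm⟩⟩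
  obtain ⟨v, hvA, hveq⟩ := A.exists_mem_eq_inf' hAne (fun w => f w)
  have hvB : v ∈ B := (Finset.mem_filter.1 hvA).1
  have hvs : s v = sstar := (Finset.mem_filter.1 hvA).2
  have hvmin : ∀ w ∈ A, f v ≤ f w := fun w hw => hveq ▸ Finset.inf'_le _ hw
  have hsstarpos : 0 < sstar := hvs ▸ hspos v hvB
  have hsstarle : ∀ w ∈ B, sstar ≤ s w := fun w hw => Finset.inf'_le _ hw
  -- the functional φ maximized at u
  set φ : (Fin d → ℝ) →L[ℝ] ℝ := g - sstar • f with hφ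
  have hφval : ∀ x, φ x = g x - sstar * f x := by
    intro x; rw [hφ]; simp [ContinuousLinearMap.sub_apply, ContinuousLinearMap.smul_apply]
  -- zeta vanishing for equal slopes
  have hzeta : ∀ w ∈ B, ∀ w' ∈ B, s w = s w' → ζ (w, w') = 0 := by
    intro w hw w' hw' hss
    by_contra hne
    have hzZ : ζ (w, w') ∈ Z := by
      rw [hZ]
      exact Finset.mem_filter.2 ⟨Finset.mem_image.2 ⟨(w, w'),
        Finset.mem_product.2 ⟨hw, hw'⟩, rfl⟩, hne⟩
    apply hgZ _ hzZ
    have h1 : g u - g w = s w * (f u - f w) := hsmul w hw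
    have h2 : g u - g w' = s w' * (f u - f w') := hsmul w' hw'
    have key : (g u - g w) * (f u - f w') = (g u - g w') * (f u - f w) := by
      rw [h1, h2, hss]; ring
    rw [hζ]
    simp only [map_add, map_sub, map_smul, smul_eq_mul]
    nlinarith [key]
  have hφmax : ∀ w ∈ V, φ w ≤ φ u := by
    intro w hwV
    by_cases hwu : w = u
    · subst hwu; exact le_refl _
    · have hwe : w ∈ V.erase u := Finset.mem_erase.2 ⟨hwu, hwV⟩
      have hgw : g w < g u := hgW w hwe
      rcases lt_trichotomy (f w) (f u) with hlt | heq | hgt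
      · have hwB : w ∈ B := Finset.mem_filter.2 ⟨hwe, hlt⟩
        have h1 := hsmul w hwB
        have h2 := hsstarle w hwB
        have h3 := hden w hwB
        rw [hφval, hφval]
        nlinarith
      · rw [hφval, hφval, heq]; linarith
      · rw [hφval, hφval]; nlinarith
  have hPmax : ∀ x ∈ P, φ x ≤ φ u := hull_le V φ (φ u) hφmax
  have hFface : {x ∈ P | φ x = φ u} = convexHull ℝ ((V : Set (Fin d → ℝ)) ∩ {w | φ w = φ u}) :=
    face_hull V φ (φ u) hφmax
  have hFext : IsExtreme ℝ P {x ∈ P | φ x = φ u} := isExtreme_eq_max P φ (φ u) hPmax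
  -- every maximizer vertex lies on the segment u v
  have hvfu : f v < f u := hBfu v hvB
  have hVF : (V : Set (Fin d → ℝ)) ∩ {w | φ w = φ u} ⊆ segment ℝ u v := by
    rintro w ⟨hwV, hwφ⟩
    simp only [Set.mem_setOf_eq] at hwφ
    by_cases hwu : w = u
    · subst hwu; exact left_mem_segment ℝ _ _
    · have hwV' : w ∈ V := by exact_mod_cast hwV
      have hwe : w ∈ V.erase u := Finset.mem_erase.2 ⟨hwu, hwV'⟩
      have hgw : g w < g u := hgW w hwe
      -- must be in A
      have hwA : w ∈ A := by
        rcases lt_trichotomy (f w) (f u) with hlt | heq | hgt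
        · have hwB : w ∈ B := Finset.mem_filter.2 ⟨hwe, hlt⟩
          refine Finset.mem_filter.2 ⟨hwB, ?_⟩
          have h1 := hsmul w hwB
          have h2 := hsstarle w hwB
          have h3 := hden w hwB
          rw [hφval, hφval] at hwφ
          by_contra hne
          have : sstar < s w := lt_of_le_of_ne h2 (Ne.symm hne)
          nlinarith
        · exfalso; rw [hφval, hφval, heq] at hwφ; linarith
        · exfalso; rw [hφval, hφval] at hwφ; nlinarith
      by_cases hwv : w = v
      · subst hwv; exact right_mem_segment ℝ _ _
      · have hwB : w ∈ B := (Finset.mem_filter.1 hwA).1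
        have hws : s w = sstar := (Finset.mem_filter.1 hwA).2
        have hz0 : ζ (w, v) = 0 := hzeta w hwB v hvB (by rw [hws, hvs])
        have hfwv : f v < f w := by
          rcases lt_or_eq_of_le (hvmin w hwA) with h | h
          · exact h
          · exfalso
            apply hwv
            rw [hζ] at hz0
            simp only [← h, sub_self, zero_smul, zero_sub] at hz0
            have h1 : (f u - f v) • (v - w) = 0 := by
              rw [smul_sub]; linear_combination (norm := module) hz0
            rcases smul_eq_zero.1 h1 with h0 | h0
            · linarith [hden v hvB]
            · exact (sub_eq_zero.1 h0).symm
        set D := f u - f v with hD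
        have hDpos : 0 < D := hden v hvB
        have ha : (0:ℝ) ≤ (f w - f v) / D := div_nonneg (by linarith) hDpos.le
        have hb : (0:ℝ) ≤ (f u - f w) / D := div_nonneg (by linarith [hBfu w hwB]) hDpos.le
        have hab : (f w - f v) / D + (f u - f w) / D = 1 := by
          field_simp
          rw [hD]; ring
        refine ⟨(f w - f v) / D, (f u - f w) / D, ha, hb, hab, ?_⟩
        -- from ζ (w,v) = 0
        rw [hζ] at hz0
        simp only at hz0
        have hDne : D ≠ 0 := ne_of_gt hDpos
        have : (f w - f v) • u + (f u - f w) • v = D • w := by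
          rw [hD]
          linear_combination (norm := module) hz0
        calc ((f w - f v) / D) • u + ((f u - f w) / D) • v
            = D⁻¹ • ((f w - f v) • u + (f u - f w) • v) := by
              rw [smul_add, smul_smul, smul_smul, div_eq_inv_mul, div_eq_inv_mul]
          _ = D⁻¹ • (D • w) := by rw [this]
          _ = w := by rw [smul_smul, inv_mul_cancel₀ hDne, one_smul]
  -- identify the face with the segment
  have hvV : v ∈ V := Finset.mem_of_mem_erase (hBV hvB)
  have hvP : v ∈ P := subset_convexHull ℝ _ (by exact_mod_cast hvV)
  have hvφ : φ v = φ u := by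
    have h1 := hsmul v hvB
    rw [hφval, hφval]
    rw [hvs] at h1
    linarith
  have huP : u ∈ P := hu.1
  have hFseg : {x ∈ P | φ x = φ u} = segment ℝ u v := by
    apply Set.Subset.antisymm
    · rw [hFface]
      exact convexHull_min hVF (convex_segment u v)
    · have hconv : Convex ℝ {x ∈ P | φ x = φ u} := by
        rw [hFface]; exact convex_convexHull ℝ _
      exact hconv.segment_subset ⟨huP, rfl⟩ ⟨hvP, hvφ⟩
  have hsegext : IsExtreme ℝ P (segment ℝ u v) := hFseg ▸ hFext
  -- v is an extreme point of the segment, hence of P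
  have hvEPseg : v ∈ (segment ℝ u v).extremePoints ℝ := by
    have hmax : ∀ x ∈ segment ℝ u v, (-f) x ≤ (-f) v := by
      rintro x ⟨a, b, ha, hb, hab, rfl⟩
      simp only [ContinuousLinearMap.neg_apply, map_add, map_smul, smul_eq_mul]
      have hb' : b = 1 - a := by linarith
      subst hb'
      nlinarith [mul_nonneg ha (sub_nonneg.2 hvfu.le)]
    have hext := isExtreme_eq_max (segment ℝ u v) (-f) ((-f) v) hmax
    have hsing : {x ∈ segment ℝ u v | (-f) x = (-f) v} = {v} := by
      apply Set.Subset.antisymm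
      · rintro x ⟨⟨a, b, ha, hb, hab, rfl⟩, hfx⟩
        simp only [ContinuousLinearMap.neg_apply, map_add, map_smul, smul_eq_mul,
          neg_inj] at hfx
        have hb' : b = 1 - a := by linarith
        subst hb'
        have hkey : a * (f u - f v) = 0 := by linear_combination -hfx
        have ha0 : a = 0 := by
          rcases mul_eq_zero.1 hkey with h0 | h0
          · exact h0
          · exfalso; linarith
        have hb1 : 1 - a = 1 := by rw [ha0]; ring
        simp [ha0, hb1]
      · rintro x rfl
        exact ⟨right_mem_segment ℝ _ _, rfl⟩
    rw [hsing] at hext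
    exact isExtreme_singleton.1 hext
  have hvEP : v ∈ P.extremePoints ℝ :=
    hsegext.extremePoints_subset_extremePoints hvEPseg
  exact ⟨v, hvEP, fun h => absurd (h ▸ hvfu) (lt_irrefl _), hvfu, hsegext⟩

-- 6. descent lemma
lemma descent (V : Finset (Fin d → ℝ)) (f : (Fin d → ℝ) →L[ℝ] ℝ)
    (hint : ∀ w ∈ V, ∃ a : ℤ, f w = a) (m : ℝ)
    (hm : ∀ w ∈ V, m ≤ f w) (hatt : ∃ w ∈ V, f w = m) :
    ∀ (n : ℕ) (u : Fin d → ℝ),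
      u ∈ (convexHull ℝ (V : Set (Fin d → ℝ))).extremePoints ℝ → f u ≤ m + n →
      ∃ w, w ∈ (convexHull ℝ (V : Set (Fin d → ℝ))).extremePoints ℝ ∧ f w = m ∧
        ∃ p : (polytopeGraph (convexHull ℝ (V : Set (Fin d → ℝ)))).Walk u w,
          p.length ≤ n := by
  intro n
  induction n with
  | zero =>
    intro u hu hn
    have huV : u ∈ V := by exact_mod_cast extremePoints_convexHull_subset hu
    have : f u = m := le_antisymm (by simpa using hn) (hm u huV)
    exact ⟨u, hu, this, SimpleGraph.Walk.nil, by simp⟩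
  | succ n ih =>
    intro u hu hn
    have huV : u ∈ V := by exact_mod_cast extremePoints_convexHull_subset hu
    by_cases hfu : f u = m
    · exact ⟨u, hu, hfu, SimpleGraph.Walk.nil, by simp⟩
    · have hlt : m < f u := lt_of_le_of_ne (hm u huV) (Ne.symm hfu)
      obtain ⟨w0, hw0V, hw0m⟩ := hatt
      obtain ⟨v, hvEP, hvne, hvlt, hseg⟩ :=
        improving_edge V u hu f ⟨w0, hw0V, by rw [hw0m]; exact hlt⟩
      have hvV : v ∈ V := by exact_mod_cast extremePoints_convexHull_subset hvEP
      obtain ⟨a, ha⟩ := hint u huV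
      obtain ⟨b, hb⟩ := hint v hvV
      have hba : b < a := by exact_mod_cast (by rw [← ha, ← hb]; exact hvlt : (b:ℝ) < a)
      have hstep : f v ≤ f u - 1 := by
        rw [ha, hb]
        have : b ≤ a - 1 := by omega
        exact_mod_cast (by exact_mod_cast this : (b:ℝ) ≤ (a:ℝ) - 1)
      have hvn : f v ≤ m + n := by push_cast at hn ⊢; linarith
      obtain ⟨w, hwEP, hwm, p, hp⟩ := ih v hvEP hvn
      have hadj : (polytopeGraph (convexHull ℝ (V : Set (Fin d → ℝ)))).Adj u v :=
        ⟨fun h => hvne h.symm, hu, hvEP, hseg⟩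
      exact ⟨w, hwEP, hwm, SimpleGraph.Walk.cons hadj p, by
        simp only [SimpleGraph.Walk.length_cons]; omega⟩

-- 7. graph of a face is a subgraph
lemma face_graph_le (P F : Set (Fin d → ℝ)) (hF : IsExtreme ℝ P F) :
    polytopeGraph F ≤ polytopeGraph P := by
  intro u v h
  obtain ⟨hne, huEP, hvEP, hseg⟩ := h
  exact ⟨hne, hF.extremePoints_subset_extremePoints huEP,
    hF.extremePoints_subset_extremePoints hvEP, hF.trans hseg⟩

-- 8. from any vertex one can reach a vertex minimizing f
lemma reach_min (V : Finset (Fin d → ℝ)) (f : (Fin d → ℝ) →L[ℝ] ℝ) (m : ℝ)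
    (hm : ∀ w ∈ V, m ≤ f w) (hatt : ∃ w ∈ V, f w = m) :
    ∀ (N : ℕ) (u : Fin d → ℝ),
      (V.filter (fun w => f w < f u)).card ≤ N →
      u ∈ (convexHull ℝ (V : Set (Fin d → ℝ))).extremePoints ℝ →
      ∃ w, w ∈ (convexHull ℝ (V : Set (Fin d → ℝ))).extremePoints ℝ ∧ f w = m ∧
        (polytopeGraph (convexHull ℝ (V : Set (Fin d → ℝ)))).Reachable u w := by
  classical
  intro N
  induction N with
  | zero =>
    intro u hcard hu
    have huV : u ∈ V := by exact_mod_cast extremePoints_convexHull_subset hu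
    obtain ⟨w0, hw0V, hw0m⟩ := hatt
    have hempty : (V.filter (fun w => f w < f u)) = ∅ := Finset.card_eq_zero.1 (le_antisymm hcard (Nat.zero_le _))
    have : ¬ (f w0 < f u) := by
      intro hcon
      have : w0 ∈ V.filter (fun w => f w < f u) := Finset.mem_filter.2 ⟨hw0V, hcon⟩
      rw [hempty] at this; exact absurd this (Finset.notMem_empty _)
    have : f u = m := le_antisymm (by rw [← hw0m]; linarith) (hm u huV)
    exact ⟨u, hu, this, SimpleGraph.Reachable.refl u⟩
  | succ N ih =>
    intro u hcard hu
    have huV : u ∈ V := by exact_mod_cast extremePoints_convexHull_subset hu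
    by_cases hfu : f u = m
    · exact ⟨u, hu, hfu, SimpleGraph.Reachable.refl u⟩
    · have hlt : m < f u := lt_of_le_of_ne (hm u huV) (Ne.symm hfu)
      obtain ⟨w0, hw0V, hw0m⟩ := hatt
      obtain ⟨v, hvEP, hvne, hvlt, hseg⟩ :=
        improving_edge V u hu f ⟨w0, hw0V, by rw [hw0m]; exact hlt⟩
      have hvV : v ∈ V := by exact_mod_cast extremePoints_convexHull_subset hvEP
      have hss : (V.filter (fun w => f w < f v)) ⊂ (V.filter (fun w => f w < f u)) := by
        refine Finset.ssubset_iff_of_subset ?_ |>.2 ⟨v, Finset.mem_filter.2 ⟨hvV, hvlt⟩, ?_⟩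
        · intro w hw
          obtain ⟨hwV, hwf⟩ := Finset.mem_filter.1 hw
          exact Finset.mem_filter.2 ⟨hwV, lt_trans hwf hvlt⟩
        · intro hcon
          exact absurd (Finset.mem_filter.1 hcon).2 (lt_irrefl _)
      have hcard' : (V.filter (fun w => f w < f v)).card ≤ N := by
        have := Finset.card_lt_card hss
        omega
      obtain ⟨w, hwEP, hwm, hreach⟩ := ih v hcard' hvEP
      have hadj : (polytopeGraph (convexHull ℝ (V : Set (Fin d → ℝ)))).Adj u v :=
        ⟨fun h => hvne h.symm, hu, hvEP, hseg⟩
      exact ⟨w, hwEP, hwm, hadj.reachable.trans hreach⟩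

-- 9. connectivity of polytope graphs
lemma polytope_connected :
    ∀ (N : ℕ) (V : Finset (Fin d → ℝ)), V.card ≤ N →
      ∀ u v, u ∈ (convexHull ℝ (V : Set (Fin d → ℝ))).extremePoints ℝ →
        v ∈ (convexHull ℝ (V : Set (Fin d → ℝ))).extremePoints ℝ →
        (polytopeGraph (convexHull ℝ (V : Set (Fin d → ℝ)))).Reachable u v := by
  classical
  intro N
  induction N with
  | zero =>
    intro V hV u v hu _
    rw [Finset.card_eq_zero.1 (le_antisymm hV (Nat.zero_le _))] at hu
    simp only [Finset.coe_empty, convexHull_empty, extremePoints_empty] at hu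
    exact absurd hu (Set.notMem_empty _)
  | succ N ih =>
    intro V hV u v hu hv
    by_cases huv : u = v
    · exact huv ▸ SimpleGraph.Reachable.refl u
    obtain ⟨j, hj⟩ : ∃ j, u j ≠ v j := by
      by_contra hcon; push_neg at hcon; exact huv (funext hcon)
    set f : (Fin d → ℝ) →L[ℝ] ℝ := ContinuousLinearMap.proj j with hf
    have huV : u ∈ V := by exact_mod_cast extremePoints_convexHull_subset hu
    have hvV : v ∈ V := by exact_mod_cast extremePoints_convexHull_subset hv
    have hVne : V.Nonempty := ⟨u, huV⟩
    set m := V.inf' hVne (fun w => f w) with hm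
    have hmle : ∀ w ∈ V, m ≤ f w := fun w hw => Finset.inf'_le _ hw
    obtain ⟨w0, hw0V, hw0⟩ := V.exists_mem_eq_inf' hVne (fun w => f w)
    have hatt : ∃ w ∈ V, f w = m := ⟨w0, hw0V, hw0.symm⟩
    obtain ⟨wu, hwuEP, hwum, hru⟩ :=
      reach_min V f m hmle hatt (V.filter (fun w => f w < f u)).card u le_rfl hu
    obtain ⟨wv, hwvEP, hwvm, hrv⟩ :=
      reach_min V f m hmle hatt (V.filter (fun w => f w < f v)).card v le_rfl hv
    -- the minimizing face
    have hφ : ∀ w ∈ V, (-f) w ≤ -m := fun w hw => by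
      simp only [ContinuousLinearMap.neg_apply, neg_le_neg_iff]; exact hmle w hw
    have hPmax : ∀ x ∈ convexHull ℝ (V : Set (Fin d → ℝ)), (-f) x ≤ -m :=
      hull_le V (-f) (-m) hφ
    have hFext : IsExtreme ℝ (convexHull ℝ (V : Set (Fin d → ℝ)))
        {x ∈ convexHull ℝ (V : Set (Fin d → ℝ)) | (-f) x = -m} :=
      isExtreme_eq_max _ (-f) (-m) hPmax
    have hFface := face_hull V (-f) (-m) hφ
    set V' := V.filter (fun w => (-f) w = -m) with hV'
    have hVeq : ((V' : Finset (Fin d → ℝ)) : Set (Fin d → ℝ))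
        = (V : Set (Fin d → ℝ)) ∩ {w | (-f) w = -m} := by
      ext y; simp [hV', Finset.mem_filter]
    have hFhull : {x ∈ convexHull ℝ (V : Set (Fin d → ℝ)) | (-f) x = -m}
        = convexHull ℝ ((V' : Finset (Fin d → ℝ)) : Set (Fin d → ℝ)) := by
      rw [hFface, hVeq]
    -- V' is strictly smaller
    have hcard' : V'.card ≤ N := by
      have hex : ∃ w1 ∈ V, f w1 ≠ m := by
        by_contra hcon; push_neg at hcon
        exact hj (by rw [show u j = f u from rfl, show v j = f v from rfl,
          hcon u huV, hcon v hvV])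
      obtain ⟨w1, hw1V, hw1⟩ := hex
      have hss : V' ⊂ V := by
        refine Finset.ssubset_iff_of_subset (Finset.filter_subset _ _) |>.2
          ⟨w1, hw1V, ?_⟩
        intro hcon
        have := (Finset.mem_filter.1 hcon).2
        simp only [ContinuousLinearMap.neg_apply, neg_inj] at this
        exact hw1 this
      have := Finset.card_lt_card hss
      omega
    -- wu, wv are extreme points of the face
    have hwuF : wu ∈ {x ∈ convexHull ℝ (V : Set (Fin d → ℝ)) | (-f) x = -m} :=
      ⟨hwuEP.1, by simp [hwum]⟩
    have hwvF : wv ∈ {x ∈ convexHull ℝ (V : Set (Fin d → ℝ)) | (-f) x = -m} :=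
      ⟨hwvEP.1, by simp [hwvm]⟩
    have hwuEPF : wu ∈ (convexHull ℝ ((V' : Finset (Fin d → ℝ)) :
        Set (Fin d → ℝ))).extremePoints ℝ := by
      rw [← hFhull]
      exact inter_extremePoints_subset_extremePoints_of_subset hFext.1 ⟨hwuF, hwuEP⟩
    have hwvEPF : wv ∈ (convexHull ℝ ((V' : Finset (Fin d → ℝ)) :
        Set (Fin d → ℝ))).extremePoints ℝ := by
      rw [← hFhull]
      exact inter_extremePoints_subset_extremePoints_of_subset hFext.1 ⟨hwvF, hwvEP⟩
    have hreachF := ih V' hcard' wu wv hwuEPF hwvEPF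
    have hle : polytopeGraph (convexHull ℝ ((V' : Finset (Fin d → ℝ)) : Set (Fin d → ℝ)))
        ≤ polytopeGraph (convexHull ℝ (V : Set (Fin d → ℝ))) := by
      rw [← hFhull]
      exact face_graph_le _ _ hFext
    have hreachP := hreachF.mono hle
    exact (hru.trans hreachP).trans hrv.symm

-- 10. support of a walk consists of extreme points
lemma walk_support_mem (P : Set (Fin d → ℝ)) {a b : Fin d → ℝ}
    (p : (polytopeGraph P).Walk a b) (ha : a ∈ P.extremePoints ℝ) :
    ∀ x ∈ p.support, x ∈ P.extremePoints ℝ := by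
  induction p with
  | nil => intro x hx; simp only [SimpleGraph.Walk.support_nil, List.mem_singleton] at hx; exact hx ▸ ha
  | @cons a c b hadj q ih =>
    intro x hx
    rw [SimpleGraph.Walk.support_cons] at hx
    rcases List.mem_cons.1 hx with rfl | hx'
    · exact ha
    · exact ih hadj.2.2.1 x hx'

-- 11. distances in a polytope graph are bounded by the number of candidate vertices
lemma dist_bound (V : Finset (Fin d → ℝ)) (u v : Fin d → ℝ)
    (hu : u ∈ (convexHull ℝ (V : Set (Fin d → ℝ))).extremePoints ℝ) :
    (polytopeGraph (convexHull ℝ (V : Set (Fin d → ℝ)))).dist u v ≤ V.card := by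
  classical
  by_cases hr : (polytopeGraph (convexHull ℝ (V : Set (Fin d → ℝ)))).Reachable u v
  · obtain ⟨p, hp⟩ := hr.exists_walk_length_eq_dist
    set q := p.bypass with hq
    have hqpath : q.IsPath := p.bypass_isPath
    have hd : (polytopeGraph (convexHull ℝ (V : Set (Fin d → ℝ)))).dist u v ≤ q.length :=
      SimpleGraph.dist_le q
    have hsupp : ∀ x ∈ q.support, x ∈ V := by
      intro x hx
      exact_mod_cast extremePoints_convexHull_subset
        (walk_support_mem _ q hu x hx)
    have hnodup : q.support.Nodup := hqpath.support_nodup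
    have hcard : q.support.length ≤ V.card := by
      rw [← List.toFinset_card_of_nodup hnodup]
      apply Finset.card_le_card
      intro x hx
      exact hsupp x (List.mem_toFinset.1 hx)
    have := q.length_support
    omega
  · rw [SimpleGraph.dist_eq_zero_of_not_reachable hr]
    exact Nat.zero_le _

-- 12. distance bound through a face
lemma dist_le_via_face (V : Finset (Fin d → ℝ)) (f : (Fin d → ℝ) →L[ℝ] ℝ)
    (hint : ∀ w ∈ V, ∃ a : ℤ, f w = a) (m : ℝ)
    (hm : ∀ w ∈ V, m ≤ f w) (hatt : ∃ w ∈ V, f w = m)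
    (F : Set (Fin d → ℝ))
    (hF : F = {x ∈ convexHull ℝ (V : Set (Fin d → ℝ)) | f x = m})
    (u v : Fin d → ℝ)
    (hu : u ∈ (convexHull ℝ (V : Set (Fin d → ℝ))).extremePoints ℝ)
    (hv : v ∈ (convexHull ℝ (V : Set (Fin d → ℝ))).extremePoints ℝ)
    (nu nv : ℕ) (hnu : f u ≤ m + nu) (hnv : f v ≤ m + nv) :
    (polytopeGraph (convexHull ℝ (V : Set (Fin d → ℝ)))).dist u v
      ≤ nu + polyDiam F + nv := by
  classical
  obtain ⟨wu, hwuEP, hwum, pu, hpu⟩ := descent V f hint m hm hatt nu u hu hnu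
  obtain ⟨wv, hwvEP, hwvm, pv, hpv⟩ := descent V f hint m hm hatt nv v hv hnv
  -- the face is extreme and is the hull of its vertices
  have hneg : ∀ w ∈ V, (-f) w ≤ -m := fun w hw => neg_le_neg (hm w hw)
  have hFset : F = {x ∈ convexHull ℝ (V : Set (Fin d → ℝ)) | (-f) x = -m} := by
    rw [hF]; ext x
    simp only [Set.mem_setOf_eq, ContinuousLinearMap.neg_apply, neg_inj]
  have hFext : IsExtreme ℝ (convexHull ℝ (V : Set (Fin d → ℝ))) F := by
    rw [hFset]
    exact isExtreme_eq_max _ (-f) (-m)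
      (hull_le V (-f) (-m) hneg)
  set VF := V.filter (fun w => (-f) w = -m) with hVF
  have hVFeq : ((VF : Finset (Fin d → ℝ)) : Set (Fin d → ℝ))
      = (V : Set (Fin d → ℝ)) ∩ {w | (-f) w = -m} := by
    ext y; simp [hVF, Finset.mem_filter]
  have hFhull : F = convexHull ℝ ((VF : Finset (Fin d → ℝ)) : Set (Fin d → ℝ)) := by
    rw [hFset, face_hull V (-f) (-m) hneg, hVFeq]
  -- wu, wv are extreme points of the face
  have hwuF : wu ∈ F := by rw [hF]; exact ⟨hwuEP.1, hwum⟩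
  have hwvF : wv ∈ F := by rw [hF]; exact ⟨hwvEP.1, hwvm⟩
  have hwuEPF : wu ∈ F.extremePoints ℝ :=
    inter_extremePoints_subset_extremePoints_of_subset hFext.1 ⟨hwuF, hwuEP⟩
  have hwvEPF : wv ∈ F.extremePoints ℝ :=
    inter_extremePoints_subset_extremePoints_of_subset hFext.1 ⟨hwvF, hwvEP⟩
  -- they are connected within the face
  have hreach : (polytopeGraph F).Reachable wu wv := by
    rw [hFhull] at hwuEPF hwvEPF ⊢
    exact polytope_connected VF.card VF le_rfl wu wv hwuEPF hwvEPF
  obtain ⟨pF, hpF⟩ := hreach.exists_walk_length_eq_dist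
  -- the distance within the face is at most the diameter of the face
  have hdistF : (polytopeGraph F).dist wu wv ≤ polyDiam F := by
    apply le_csSup
    · refine ⟨VF.card, ?_⟩
      rintro n ⟨a, haEP, b, hbEP, hab⟩
      rw [← hab]
      have := dist_bound VF a b (by rw [← hFhull]; exact haEP)
      rw [← hFhull] at this
      exact this
    · exact ⟨wu, hwuEPF, wv, hwvEPF, rfl⟩
  -- lift the walk to P and concatenate
  have hle := face_graph_le _ _ hFext
  set pFP := pF.mapLe hle with hpFP
  have hlen : pFP.length = pF.length := by
    rw [hpFP]; exact SimpleGraph.Walk.length_map _ _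
  set total := pu.append (pFP.append pv.reverse) with htotal
  have hdist := SimpleGraph.dist_le total
  rw [htotal] at hdist
  simp only [SimpleGraph.Walk.length_append, SimpleGraph.Walk.length_reverse] at hdist
  have : pF.length ≤ polyDiam F := by rw [hpF]; exact hdistF
  omega

theorem polyDiam_le_max_faces' (d k : ℕ) (P : Set (Fin d → ℝ))
    (hP : ∃ V : Finset (Fin d → ℝ),
      (∀ v ∈ V, ∀ i : Fin d, ∃ n : ℕ, n ≤ k ∧ v i = n) ∧
      P = convexHull ℝ (V : Set (Fin d → ℝ)))
    (j : Fin d) (l h : ℝ)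
    (hl : IsLeast {t : ℝ | ∃ x ∈ P, x j = t} l)
    (hh : IsGreatest {t : ℝ | ∃ x ∈ P, x j = t} h)
    (L H : Set (Fin d → ℝ))
    (hL : L = {x ∈ P | x j = l}) (hH : H = {x ∈ P | x j = h}) :
    (polyDiam P : ℝ) ≤ (max (polyDiam L) (polyDiam H) : ℕ) + h - l := by
  classical
  obtain ⟨V, hVint, rfl⟩ := hP
  set f : (Fin d → ℝ) →L[ℝ] ℝ := ContinuousLinearMap.proj j with hf
  have hfval : ∀ x : Fin d → ℝ, f x = x j := fun x => rfl
  have hVsub : (V : Set (Fin d → ℝ)) ⊆ convexHull ℝ (V : Set (Fin d → ℝ)) :=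
    subset_convexHull ℝ _
  have hlV : ∀ w ∈ V, l ≤ f w := fun w hw => hl.2 ⟨w, hVsub hw, rfl⟩
  have hhV : ∀ w ∈ V, f w ≤ h := fun w hw => hh.2 ⟨w, hVsub hw, rfl⟩
  obtain ⟨x0, hx0P, hx0l⟩ := hl.1
  obtain ⟨x1, hx1P, hx1h⟩ := hh.1
  have hlh : l ≤ h := hl.2 hh.1
  have hVne : V.Nonempty := by
    rw [← Finset.coe_nonempty]
    exact convexHull_nonempty_iff.1 ⟨x0, hx0P⟩
  -- l is attained on V
  obtain ⟨w0, hw0V, hw0⟩ := V.exists_mem_eq_inf' hVne (fun w => f w)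
  have hw0l : f w0 = l := by
    refine le_antisymm ?_ (hlV w0 hw0V)
    have hminV : ∀ w ∈ V, (-f) w ≤ -(f w0) := fun w hw => by
      simp only [ContinuousLinearMap.neg_apply, neg_le_neg_iff]
      rw [← hw0]; exact Finset.inf'_le _ hw
    have := hull_le V (-f) (-(f w0)) hminV x0 hx0P
    simp only [ContinuousLinearMap.neg_apply, neg_le_neg_iff] at this
    rw [hfval x0, hx0l] at this
    exact this
  -- h is attained on V
  obtain ⟨w1, hw1V, hw1⟩ := V.exists_mem_eq_sup' hVne (fun w => f w)
  have hw1h : f w1 = h := by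
    refine le_antisymm (hhV w1 hw1V) ?_
    have hmaxV : ∀ w ∈ V, f w ≤ f w1 := fun w hw => by
      rw [← hw1]; exact Finset.le_sup' _ hw
    have := hull_le V f (f w1) hmaxV x1 hx1P
    rw [hfval x1, hx1h] at this
    exact this
  -- integrality
  have hint : ∀ w ∈ V, ∃ a : ℤ, f w = a := by
    intro w hw
    obtain ⟨n, -, hn⟩ := hVint w hw j
    exact ⟨(n : ℤ), by rw [hfval, hn]; push_cast; ring⟩
  have hint' : ∀ w ∈ V, ∃ a : ℤ, (-f) w = a := by
    intro w hw
    obtain ⟨a, ha⟩ := hint w hw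
    exact ⟨-a, by simp [ha]⟩
  -- the diameter set
  set S := {n : ℕ | ∃ u ∈ (convexHull ℝ (V : Set (Fin d → ℝ))).extremePoints ℝ,
    ∃ v ∈ (convexHull ℝ (V : Set (Fin d → ℝ))).extremePoints ℝ,
    (polytopeGraph (convexHull ℝ (V : Set (Fin d → ℝ)))).dist u v = n} with hS
  have hSdiam : polyDiam (convexHull ℝ (V : Set (Fin d → ℝ))) = sSup S := rfl
  have hSbdd : BddAbove S := by
    refine ⟨V.card, ?_⟩
    rintro n ⟨u, hu, v, hv, hn⟩
    rw [← hn]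
    exact dist_bound V u v hu
  by_cases hSne : S.Nonempty
  · obtain ⟨u, huEP, v, hvEP, hdist⟩ := Nat.sSup_mem hSne hSbdd
    have huV : u ∈ V := by exact_mod_cast extremePoints_convexHull_subset huEP
    have hvV : v ∈ V := by exact_mod_cast extremePoints_convexHull_subset hvEP
    -- natural number coordinates
    obtain ⟨nl, -, hnl⟩ := hVint w0 hw0V j
    obtain ⟨nh, -, hnh⟩ := hVint w1 hw1V j
    obtain ⟨nu, -, hnu⟩ := hVint u huV j
    obtain ⟨nv, -, hnv⟩ := hVint v hvV j
    have hnl' : l = (nl : ℝ) := by rw [← hw0l, hfval, hnl]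
    have hnh' : h = (nh : ℝ) := by rw [← hw1h, hfval, hnh]
    have hul : (nl : ℝ) ≤ (nu : ℝ) := by rw [← hnl', ← hnu]; exact hlV u huV
    have hvl : (nl : ℝ) ≤ (nv : ℝ) := by rw [← hnl', ← hnv]; exact hlV v hvV
    have huh : (nu : ℝ) ≤ (nh : ℝ) := by rw [← hnh', ← hnu]; exact hhV u huV
    have hvh : (nv : ℝ) ≤ (nh : ℝ) := by rw [← hnh', ← hnv]; exact hhV v hvV
    have hul' : nl ≤ nu := by exact_mod_cast hul
    have hvl' : nl ≤ nv := by exact_mod_cast hvl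
    have huh' : nu ≤ nh := by exact_mod_cast huh
    have hvh' : nv ≤ nh := by exact_mod_cast hvh
    -- bound via L
    have hboundL := dist_le_via_face V f hint l hlV ⟨w0, hw0V, hw0l⟩ L
      (by rw [hL]; rfl) u v huEP hvEP (nu - nl) (nv - nl)
      (by rw [hfval, hnu, hnl']; push_cast [Nat.cast_sub hul']; linarith)
      (by rw [hfval, hnv, hnl']; push_cast [Nat.cast_sub hvl']; linarith)
    -- bound via H
    have hattH : ∃ w ∈ V, (-f) w = -h := ⟨w1, hw1V, by simp [hw1h]⟩
    have hHset : H = {x ∈ convexHull ℝ (V : Set (Fin d → ℝ)) | (-f) x = -h} := by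
      rw [hH]; ext x
      simp only [Set.mem_setOf_eq, ContinuousLinearMap.neg_apply, neg_inj]
      exact Iff.rfl
    have hboundH := dist_le_via_face V (-f) hint' (-h)
      (fun w hw => neg_le_neg (hhV w hw)) hattH H hHset u v huEP hvEP
      (nh - nu) (nh - nv)
      (by simp only [ContinuousLinearMap.neg_apply]
          rw [hfval, hnu]; push_cast [Nat.cast_sub huh']; linarith)
      (by simp only [ContinuousLinearMap.neg_apply]
          rw [hfval, hnv]; push_cast [Nat.cast_sub hvh']; linarith)
    -- assemble
    rw [hSdiam, ← hdist]
    set n0 := (polytopeGraph (convexHull ℝ (V : Set (Fin d → ℝ)))).dist u v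
    set M := max (polyDiam L) (polyDiam H) with hM
    have hLM : polyDiam L ≤ M := le_max_left _ _
    have hHM : polyDiam H ≤ M := le_max_right _ _
    have hrL : (n0 : ℝ) ≤ ((nu - nl : ℕ) : ℝ) + polyDiam L + ((nv - nl : ℕ) : ℝ) := by
      exact_mod_cast hboundL
    have hrH : (n0 : ℝ) ≤ ((nh - nu : ℕ) : ℝ) + polyDiam H + ((nh - nv : ℕ) : ℝ) := by
      exact_mod_cast hboundH
    rw [Nat.cast_sub hul', Nat.cast_sub hvl'] at hrL
    rw [Nat.cast_sub huh', Nat.cast_sub hvh'] at hrH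
    have hLM' : (polyDiam L : ℝ) ≤ (M : ℝ) := by exact_mod_cast hLM
    have hHM' : (polyDiam H : ℝ) ≤ (M : ℝ) := by exact_mod_cast hHM
    rw [hnl', hnh']
    linarith
  · have hSempty : S = ∅ := Set.not_nonempty_iff_eq_empty.1 hSne
    rw [hSdiam, hSempty, csSup_empty]
    simp only [Nat.bot_eq_zero, Nat.cast_zero]
    have : (0:ℝ) ≤ (max (polyDiam L) (polyDiam H) : ℕ) := Nat.cast_nonneg _
    linarith

end Helpers

/-- Let `P` be a lattice `(d,k)`-polytope, `j` a coordinate index, `l` and `h` the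
minimum and maximum of `x j` over `x ∈ P`, and `L`, `H` the corresponding faces of `P`.
Then `δ(P) ≤ max {δ(L), δ(H)} + h − l`. -/
theorem polyDiam_le_max_faces (d k : ℕ) (P : Set (Fin d → ℝ))
    (hP : IsLatticePolytope d k P) (j : Fin d) (l h : ℝ)
    (hl : IsLeast {t : ℝ | ∃ x ∈ P, x j = t} l)
    (hh : IsGreatest {t : ℝ | ∃ x ∈ P, x j = t} h)
    (L H : Set (Fin d → ℝ))
    (hL : L = {x ∈ P | x j = l}) (hH : H = {x ∈ P | x j = h}) :
    (polyDiam P : ℝ) ≤ (max (polyDiam L) (polyDiam H) : ℕ) + h - l := by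
  exact polyDiam_le_max_faces' d k P hP j l h hl hh L H hL hH
end

section
/- Let P be a lattice (d,k)-polytope, let j ∈ {1,…,d}, let l_j = min{x_j : x ∈ P}, and let F = P ∩ {x ∈ ℝ^d : x_j = l_j}. Then every vertex x of P satisfies d(x,F) ≤ x_j − l_j. -/
open scoped BigOperators

open Set

variable {d : ℕ}

/-- The cone of directions at `x` generated by `v - x`, `v ∈ V`. -/
def coneAt (V : Finset (Fin d → ℝ)) (x : Fin d → ℝ) : Set (Fin d → ℝ) :=
  {c | ∃ μ : (Fin d → ℝ) → ℝ, (∀ v ∈ V, 0 ≤ μ v) ∧ ∑ v ∈ V, μ v • (v - x) = c}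

lemma coneAt_smul {V : Finset (Fin d → ℝ)} {x c : Fin d → ℝ} (hc : c ∈ coneAt V x)
    {t : ℝ} (ht : 0 ≤ t) : t • c ∈ coneAt V x := by
  obtain ⟨μ, hμ, hsum⟩ := hc
  refine ⟨fun v => t * μ v, fun v hv => mul_nonneg ht (hμ v hv), ?_⟩
  rw [← hsum, Finset.smul_sum]
  exact Finset.sum_congr rfl fun v hv => by rw [mul_smul]

lemma coneAt_add {V : Finset (Fin d → ℝ)} {x c c' : Fin d → ℝ} (hc : c ∈ coneAt V x)
    (hc' : c' ∈ coneAt V x) : c + c' ∈ coneAt V x := by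
  obtain ⟨μ, hμ, hsum⟩ := hc
  obtain ⟨ν, hν, hsum'⟩ := hc'
  refine ⟨fun v => μ v + ν v, fun v hv => add_nonneg (hμ v hv) (hν v hv), ?_⟩
  rw [← hsum, ← hsum', ← Finset.sum_add_distrib]
  exact Finset.sum_congr rfl fun v hv => by rw [add_smul]

lemma coneAt_convex (V : Finset (Fin d → ℝ)) (x : Fin d → ℝ) : Convex ℝ (coneAt V x) := by
  intro a ha b hb s t hs ht _
  exact coneAt_add (coneAt_smul ha hs) (coneAt_smul hb ht)

lemma single_mem_coneAt {V : Finset (Fin d → ℝ)} {x v : Fin d → ℝ} (hv : v ∈ V) :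
    v - x ∈ coneAt V x := by
  refine ⟨fun u => if u = v then 1 else 0, fun u _ => by positivity, ?_⟩
  rw [Finset.sum_eq_single v]
  · simp
  · intro u hu huv; simp [huv]
  · intro h; exact absurd hv h

lemma sub_mem_coneAt {V : Finset (Fin d → ℝ)} {x p : Fin d → ℝ}
    (hp : p ∈ convexHull ℝ (V : Set (Fin d → ℝ))) : p - x ∈ coneAt V x := by
  rw [Finset.convexHull_eq] at hp
  obtain ⟨w, hw0, hw1, hwp⟩ := hp
  rw [Finset.centerMass_eq_of_sum_1 _ _ hw1] at hwp
  refine ⟨w, hw0, ?_⟩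
  have : ∑ v ∈ V, w v • (v - x) = (∑ v ∈ V, w v • v) - (∑ v ∈ V, w v) • x := by
    rw [Finset.sum_smul, ← Finset.sum_sub_distrib]
    exact Finset.sum_congr rfl fun v hv => smul_sub (w v) v x
  simp only [id] at hwp
  rw [this, hw1, hwp, one_smul]

variable {d : ℕ}

/-- The endpoints of a segment are extreme points of it. -/
lemma right_mem_extremePoints_segment {u w : Fin d → ℝ} (huw : u ≠ w) :
    w ∈ (segment ℝ u w).extremePoints ℝ := by
  refine ⟨right_mem_segment ℝ u w, ?_⟩
  rintro p ⟨a₁, b₁, ha₁, hb₁, hab₁, rfl⟩ q ⟨a₂, b₂, ha₂, hb₂, hab₂, rfl⟩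
    ⟨c₁, c₂, hc₁, hc₂, hc, hcw⟩
  have key : (c₁ * a₁ + c₂ * a₂) • u + (c₁ * b₁ + c₂ * b₂) • w = w := by
    calc (c₁ * a₁ + c₂ * a₂) • u + (c₁ * b₁ + c₂ * b₂) • w
        = c₁ • (a₁ • u + b₁ • w) + c₂ • (a₂ • u + b₂ • w) := by module
      _ = w := hcw
  have hsum : (c₁ * a₁ + c₂ * a₂) + (c₁ * b₁ + c₂ * b₂) = 1 := by
    have : c₁ * (a₁ + b₁) + c₂ * (a₂ + b₂) = 1 := by rw [hab₁, hab₂, mul_one, mul_one, hc]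
    ring_nf at this ⊢; linarith
  have hs0 : c₁ * a₁ + c₂ * a₂ = 0 := by
    have h2 : (c₁ * a₁ + c₂ * a₂) • (u - w) = 0 := by
      have : (c₁ * b₁ + c₂ * b₂) = 1 - (c₁ * a₁ + c₂ * a₂) := by linarith
      rw [this] at key
      rw [smul_sub]
      have := key
      rw [sub_smul, one_smul] at this
      calc (c₁ * a₁ + c₂ * a₂) • u - (c₁ * a₁ + c₂ * a₂) • w
          = ((c₁ * a₁ + c₂ * a₂) • u + (w - (c₁ * a₁ + c₂ * a₂) • w)) - w := by abel
        _ = w - w := by rw [this]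
        _ = 0 := sub_self w
    rcases smul_eq_zero.1 h2 with h | h
    · exact h
    · exact absurd (sub_eq_zero.1 h) huw
  have ha₁0 : c₁ * a₁ = 0 := by nlinarith
  have ha₂0 : c₂ * a₂ = 0 := by nlinarith
  have hA₁ : a₁ = 0 := by
    rcases mul_eq_zero.1 ha₁0 with h | h
    · exact absurd h (ne_of_gt hc₁)
    · exact h
  have hA₂ : a₂ = 0 := by
    rcases mul_eq_zero.1 ha₂0 with h | h
    · exact absurd h (ne_of_gt hc₂)
    · exact h
  have hB₁ : b₁ = 1 := by linarith
  have hB₂ : b₂ = 1 := by linarith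
  subst hA₁ hA₂ hB₁ hB₂
  simp

/-- Pointedness: if `x` is an extreme point of `convexHull V` then `0` is not in the
convex hull of the shifted directions. -/
lemma zero_not_mem_shifted {V : Finset (Fin d → ℝ)} {x : Fin d → ℝ}
    (hx : x ∈ (convexHull ℝ (V : Set (Fin d → ℝ))).extremePoints ℝ) :
    (0 : Fin d → ℝ) ∉ convexHull ℝ (((V.erase x).image (fun v => v - x) : Finset (Fin d → ℝ)) :
      Set (Fin d → ℝ)) := by
  intro h0
  rw [Finset.convexHull_eq] at h0
  obtain ⟨w, hw0, hw1, hwc⟩ := h0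
  rw [Finset.centerMass_eq_of_sum_1 _ _ hw1] at hwc
  simp only [id] at hwc
  set S := (V.erase x).image (fun v => v - x) with hS
  -- x is then a convex combination of V.erase x
  have hxmem : x ∈ convexHull ℝ ((V.erase x : Finset (Fin d → ℝ)) : Set (Fin d → ℝ)) := by
    have := Finset.centerMass_mem_convexHull (s := ((V.erase x : Finset (Fin d → ℝ)) : Set (Fin d → ℝ))) S (w := w) (z := fun s => x + s) hw0
      (by rw [hw1]; norm_num) ?_
    · rw [Finset.centerMass_eq_of_sum_1 _ _ hw1] at this
      have heq : ∑ s ∈ S, w s • (x + s) = x := by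
        have : ∑ s ∈ S, w s • (x + s) = (∑ s ∈ S, w s) • x + ∑ s ∈ S, w s • s := by
          rw [Finset.sum_smul, ← Finset.sum_add_distrib]
          exact Finset.sum_congr rfl fun s _ => smul_add (w s) x s
        rw [this, hw1, hwc, one_smul, add_zero]
      rwa [heq] at this
    · intro s hs
      simp only [hS, Finset.mem_image] at hs
      obtain ⟨v, hv, rfl⟩ := hs
      show x + (v - x) ∈ (↑(V.erase x) : Set (Fin d → ℝ))
      have hxv : x + (v - x) = v := by abel
      rw [hxv]
      exact Finset.mem_coe.2 hv
  -- contradiction with extremality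
  have hconv : Convex ℝ (convexHull ℝ (V : Set (Fin d → ℝ))) := convex_convexHull ℝ _
  rw [hconv.mem_extremePoints_iff_mem_diff_convexHull_diff] at hx
  refine hx.2 (convexHull_mono ?_ hxmem)
  intro v hv
  rw [Finset.coe_erase, Set.mem_diff] at hv
  exact ⟨subset_convexHull ℝ _ hv.1, hv.2⟩

/-- A strictly positive functional on the shifted directions. -/
lemma exists_pos_functional {V : Finset (Fin d → ℝ)} {x : Fin d → ℝ}
    (hx : x ∈ (convexHull ℝ (V : Set (Fin d → ℝ))).extremePoints ℝ) :
    ∃ g : (Fin d → ℝ) →L[ℝ] ℝ, ∀ v ∈ V.erase x, 0 < g (v - x) := by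
  have h0 := zero_not_mem_shifted hx
  set S := (V.erase x).image (fun v => v - x) with hS
  obtain ⟨g, u, hg0, hgS⟩ := geometric_hahn_banach_point_closed
    (convex_convexHull ℝ (S : Set (Fin d → ℝ)))
    ((S.finite_toSet.isCompact_convexHull ℝ).isClosed) h0
  rw [map_zero] at hg0
  refine ⟨g, fun v hv => ?_⟩
  have : v - x ∈ (S : Set (Fin d → ℝ)) := by
    simp only [hS, Finset.coe_image, Set.mem_image, Finset.mem_coe]
    exact ⟨v, hv, rfl⟩
  exact hg0.trans (hgS _ (subset_convexHull ℝ _ this))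

section PosFunctional

variable {V : Finset (Fin d → ℝ)} {x : Fin d → ℝ} {g : (Fin d → ℝ) →L[ℝ] ℝ}

lemma g_apply_cone (hg : ∀ v ∈ V.erase x, 0 < g (v - x)) {μ : (Fin d → ℝ) → ℝ} :
    g (∑ v ∈ V, μ v • (v - x)) = ∑ v ∈ V, μ v * g (v - x) := by
  rw [map_sum]
  exact Finset.sum_congr rfl fun v _ => by rw [map_smul, smul_eq_mul]

lemma g_nonneg_on_cone (hg : ∀ v ∈ V.erase x, 0 < g (v - x)) :
    ∀ c ∈ coneAt V x, 0 ≤ g c := by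
  rintro c ⟨μ, hμ, rfl⟩
  rw [g_apply_cone hg]
  refine Finset.sum_nonneg fun v hv => ?_
  rcases eq_or_ne v x with rfl | hvx
  · simp
  · exact mul_nonneg (hμ v hv) (le_of_lt (hg v (Finset.mem_erase.2 ⟨hvx, hv⟩)))

lemma eq_zero_of_g_eq_zero (hg : ∀ v ∈ V.erase x, 0 < g (v - x)) :
    ∀ c ∈ coneAt V x, g c = 0 → c = 0 := by
  rintro c ⟨μ, hμ, rfl⟩ hc
  rw [g_apply_cone hg] at hc
  have hterm : ∀ v ∈ V, μ v * g (v - x) = 0 := by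
    rw [Finset.sum_eq_zero_iff_of_nonneg] at hc
    · exact hc
    · intro v hv
      rcases eq_or_ne v x with rfl | hvx
      · simp
      · exact mul_nonneg (hμ v hv) (le_of_lt (hg v (Finset.mem_erase.2 ⟨hvx, hv⟩)))
  refine Finset.sum_eq_zero fun v hv => ?_
  rcases eq_or_ne v x with rfl | hvx
  · simp
  · have hgpos := hg v (Finset.mem_erase.2 ⟨hvx, hv⟩)
    have : μ v = 0 := by
      rcases mul_eq_zero.1 (hterm v hv) with h | h
      · exact h
      · exact absurd h (ne_of_gt hgpos)
    rw [this, zero_smul]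

/-- The cross-section of the cone at level `g = 1` is contained in the convex hull of the
normalized generators, and conversely. -/
lemma crossSection_subset (hg : ∀ v ∈ V.erase x, 0 < g (v - x)) :
    (convexHull ℝ (((V.erase x).image (fun v => (g (v - x))⁻¹ • (v - x)) :
        Finset (Fin d → ℝ)) : Set (Fin d → ℝ))) ⊆ {y | g y = 1} ∩ coneAt V x := by
  apply convexHull_min
  · rintro t ht
    rw [Finset.coe_image, Set.mem_image] at ht
    obtain ⟨v, hv, rfl⟩ := ht
    have hgpos := hg v (Finset.mem_coe.1 hv)
    constructor
    · show g _ = 1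
      rw [map_smul, smul_eq_mul, inv_mul_cancel₀ (ne_of_gt hgpos)]
    · exact coneAt_smul (single_mem_coneAt (Finset.mem_of_mem_erase (Finset.mem_coe.1 hv)))
        (inv_nonneg.2 (le_of_lt hgpos))
  · exact (convex_hyperplane (g : (Fin d → ℝ) →ₗ[ℝ] ℝ).isLinear 1).inter (coneAt_convex V x)

lemma mem_crossSection (hg : ∀ v ∈ V.erase x, 0 < g (v - x)) {c : Fin d → ℝ}
    (hc : c ∈ coneAt V x) (hc1 : g c = 1) :
    c ∈ convexHull ℝ (((V.erase x).image (fun v => (g (v - x))⁻¹ • (v - x)) :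
        Finset (Fin d → ℝ)) : Set (Fin d → ℝ)) := by
  obtain ⟨μ, hμ, rfl⟩ := hc
  have hsum1 : ∑ v ∈ V.erase x, μ v * g (v - x) = 1 := by
    rw [Finset.sum_erase V (show μ x * g (x - x) = 0 by simp), ← g_apply_cone hg]
    exact hc1
  have := Finset.centerMass_mem_convexHull
    (s := (((V.erase x).image (fun v => (g (v - x))⁻¹ • (v - x)) : Finset (Fin d → ℝ)) :
      Set (Fin d → ℝ)))
    (V.erase x) (w := fun v => μ v * g (v - x)) (z := fun v => (g (v - x))⁻¹ • (v - x))
    (fun v hv => mul_nonneg (hμ v (Finset.mem_of_mem_erase hv)) (le_of_lt (hg v hv)))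
    (by rw [hsum1]; norm_num)
    (fun v hv => by
      rw [Finset.coe_image, Set.mem_image]
      exact ⟨v, Finset.mem_coe.2 hv, rfl⟩)
  rw [Finset.centerMass_eq_of_sum_1 _ _ hsum1] at this
  have heq : ∑ v ∈ V.erase x, (μ v * g (v - x)) • ((g (v - x))⁻¹ • (v - x))
      = ∑ v ∈ V, μ v • (v - x) := by
    rw [← Finset.sum_erase (f := fun v => μ v • (v - x)) (a := x) V (by simp)]
    refine Finset.sum_congr rfl fun v hv => ?_
    rw [smul_smul, mul_assoc, mul_inv_cancel₀ (ne_of_gt (hg v hv)), mul_one]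
  rwa [heq] at this

end PosFunctional

section Ray

variable {V : Finset (Fin d → ℝ)} {x : Fin d → ℝ} {g : (Fin d → ℝ) →L[ℝ] ℝ}

lemma ray_isExtreme (hg : ∀ v ∈ V.erase x, 0 < g (v - x)) {b : Fin d → ℝ}
    (hgb : g b = 1)
    (hbext : b ∈ (convexHull ℝ (((V.erase x).image (fun v => (g (v - x))⁻¹ • (v - x)) :
      Finset (Fin d → ℝ)) : Set (Fin d → ℝ))).extremePoints ℝ) :
    IsExtreme ℝ (coneAt V x) {c | ∃ t : ℝ, 0 ≤ t ∧ c = t • b} := by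
  have hbC : b ∈ coneAt V x := (crossSection_subset hg hbext.1).2
  constructor
  · rintro c ⟨t, ht, rfl⟩
    exact coneAt_smul hbC ht
  rintro p hp q hq z ⟨t, ht, rfl⟩ ⟨a, a', ha, ha', haa, heq⟩
  have hgp0 : 0 ≤ g p := g_nonneg_on_cone hg p hp
  have hgq0 : 0 ≤ g q := g_nonneg_on_cone hg q hq
  have hgt : a * g p + a' * g q = t := by
    have := congrArg g heq
    rwa [map_add, map_smul, map_smul, smul_eq_mul, smul_eq_mul, map_smul, smul_eq_mul,
      hgb, mul_one] at this
  by_cases hgp : g p = 0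
  · have hp0 : p = 0 := eq_zero_of_g_eq_zero hg p hp hgp
    subst hp0
    rw [smul_zero, zero_add] at heq
    have hq' : q = (a'⁻¹ * t) • b := by
      rw [mul_smul, ← heq, inv_smul_smul₀ (ne_of_gt ha')]
    exact ⟨0, le_refl 0, (zero_smul ℝ b).symm⟩
  · by_cases hgq : g q = 0
    · have hq0 : q = 0 := eq_zero_of_g_eq_zero hg q hq hgq
      subst hq0
      rw [smul_zero, add_zero] at heq
      have hp' : p = (a⁻¹ * t) • b := by
        rw [mul_smul, ← heq, inv_smul_smul₀ (ne_of_gt ha)]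
      exact ⟨a⁻¹ * t, mul_nonneg (inv_nonneg.2 (le_of_lt ha)) ht, hp'⟩
    · have hgpp : 0 < g p := lt_of_le_of_ne hgp0 (Ne.symm hgp)
      have hgqp : 0 < g q := lt_of_le_of_ne hgq0 (Ne.symm hgq)
      have htp : 0 < t := by nlinarith
      set p' := (g p)⁻¹ • p with hp'def
      set q' := (g q)⁻¹ • q with hq'def
      have hp'B : p' ∈ convexHull ℝ (((V.erase x).image (fun v => (g (v - x))⁻¹ • (v - x)) :
          Finset (Fin d → ℝ)) : Set (Fin d → ℝ)) := by
        refine mem_crossSection hg (coneAt_smul hp (inv_nonneg.2 hgp0)) ?_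
        rw [hp'def, map_smul, smul_eq_mul, inv_mul_cancel₀ hgp]
      have hq'B : q' ∈ convexHull ℝ (((V.erase x).image (fun v => (g (v - x))⁻¹ • (v - x)) :
          Finset (Fin d → ℝ)) : Set (Fin d → ℝ)) := by
        refine mem_crossSection hg (coneAt_smul hq (inv_nonneg.2 hgq0)) ?_
        rw [hq'def, map_smul, smul_eq_mul, inv_mul_cancel₀ hgq]
      have hbopen : b ∈ openSegment ℝ p' q' := by
        refine ⟨a * g p / t, a' * g q / t, by positivity, by positivity, ?_, ?_⟩
        · field_simp
          linarith [hgt]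
        · have e1 : (a * g p / t) • p' = (a / t) • p := by
            rw [hp'def, smul_smul]
            congr 1
            field_simp
          have e2 : (a' * g q / t) • q' = (a' / t) • q := by
            rw [hq'def, smul_smul]
            congr 1
            field_simp
          rw [e1, e2]
          have : (a / t) • p + (a' / t) • q = t⁻¹ • (a • p + a' • q) := by
            rw [smul_add, smul_smul, smul_smul, div_eq_inv_mul, div_eq_inv_mul]
          rw [this, heq, smul_smul, inv_mul_cancel₀ (ne_of_gt htp), one_smul]
      have hpb := hbext.2 hp'B hq'B hbopen
      refine ⟨g p, hgp0, ?_⟩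
      rw [← hpb, hp'def, smul_smul, mul_inv_cancel₀ hgp, one_smul]

end Ray

lemma support_in_ray {V : Finset (Fin d → ℝ)} {x : Fin d → ℝ} {R : Set (Fin d → ℝ)}
    (hRext : IsExtreme ℝ (coneAt V x) R)
    (w : (Fin d → ℝ) → ℝ) (hw0 : ∀ v ∈ V, 0 ≤ w v) (hw1 : ∑ v ∈ V, w v = 1)
    (hzR : (∑ v ∈ V, w v • (v - x)) ∈ R) {v₂ : Fin d → ℝ} (hv₂ : v₂ ∈ V)
    (hwv₂ : w v₂ ≠ 0) : v₂ - x ∈ R := by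
  classical
  have hα : 0 < w v₂ := lt_of_le_of_ne (hw0 _ hv₂) (Ne.symm hwv₂)
  have hα1 : w v₂ ≤ 1 := hw1 ▸ Finset.single_le_sum hw0 hv₂
  have hsplit : ∑ v ∈ V, w v • (v - x)
      = w v₂ • (v₂ - x) + ∑ v ∈ V.erase v₂, w v • (v - x) :=
    (Finset.add_sum_erase V _ hv₂).symm
  have hrestC : (∑ v ∈ V.erase v₂, w v • (v - x)) ∈ coneAt V x := by
    refine ⟨fun v => if v = v₂ then 0 else w v,
      fun v hv => by by_cases h : v = v₂ <;> simp [h, hw0 v hv], ?_⟩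
    rw [← Finset.add_sum_erase V (fun v => (if v = v₂ then 0 else w v) • (v - x)) hv₂]
    simp only [eq_self_iff_true, if_true, zero_smul, zero_add]
    apply Finset.sum_congr rfl
    intro v hv
    rw [if_neg (Finset.ne_of_mem_erase hv)]
  rcases eq_or_lt_of_le hα1 with h1 | h1
  · -- w v₂ = 1 : all the other weights vanish
    have hrest0 : ∑ v ∈ V.erase v₂, w v = 0 := by
      have := Finset.add_sum_erase V w hv₂
      rw [hw1, h1] at this
      linarith
    have hall : ∀ v ∈ V.erase v₂, w v = 0 :=
      (Finset.sum_eq_zero_iff_of_nonneg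
        (fun v hv => hw0 v (Finset.mem_of_mem_erase hv))).1 hrest0
    have : ∑ v ∈ V, w v • (v - x) = v₂ - x := by
      rw [hsplit, Finset.sum_eq_zero (fun v hv => by rw [hall v hv, zero_smul]),
        add_zero, h1, one_smul]
    rwa [this] at hzR
  · -- w v₂ < 1
    set β := 1 - w v₂ with hβdef
    have hβ : 0 < β := by simp [hβdef]; linarith
    have hrest'C : β⁻¹ • (∑ v ∈ V.erase v₂, w v • (v - x)) ∈ coneAt V x :=
      coneAt_smul hrestC (inv_nonneg.2 (le_of_lt hβ))
    have hopen : (∑ v ∈ V, w v • (v - x)) ∈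
        openSegment ℝ (v₂ - x) (β⁻¹ • (∑ v ∈ V.erase v₂, w v • (v - x))) := by
      refine ⟨w v₂, β, hα, hβ, by simp [hβdef], ?_⟩
      rw [smul_inv_smul₀ (ne_of_gt hβ), ← hsplit]
    exact (hRext.2 (single_mem_coneAt hv₂) hrest'C hzR hopen)

lemma exists_rep {V : Finset (Fin d → ℝ)} {p : Fin d → ℝ}
    (hp : p ∈ convexHull ℝ (V : Set (Fin d → ℝ))) :
    ∃ w : (Fin d → ℝ) → ℝ, (∀ v ∈ V, 0 ≤ w v) ∧ ∑ v ∈ V, w v = 1 ∧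
      ∀ x : Fin d → ℝ, ∑ v ∈ V, w v • (v - x) = p - x := by
  rw [Finset.convexHull_eq] at hp
  obtain ⟨w, hw0, hw1, hwp⟩ := hp
  rw [Finset.centerMass_eq_of_sum_1 _ _ hw1] at hwp
  simp only [id] at hwp
  refine ⟨w, hw0, hw1, fun x => ?_⟩
  have : ∑ v ∈ V, w v • (v - x) = (∑ v ∈ V, w v • v) - (∑ v ∈ V, w v) • x := by
    rw [Finset.sum_smul, ← Finset.sum_sub_distrib]
    exact Finset.sum_congr rfl fun v hv => smul_sub (w v) v x
  rw [this, hw1, hwp, one_smul]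

/-- Main geometric lemma: a vertex of a polytope that does not minimise a linear functional
has a neighbour (along an edge) with strictly smaller value. -/
lemma exists_improving_neighbor (V : Finset (Fin d → ℝ)) (x : Fin d → ℝ)
    (hx : x ∈ (convexHull ℝ (V : Set (Fin d → ℝ))).extremePoints ℝ)
    (f : (Fin d → ℝ) →L[ℝ] ℝ) (v₁ : Fin d → ℝ) (hv₁ : v₁ ∈ V) (hfv₁ : f v₁ < f x) :
    ∃ y ∈ V, y ∈ (convexHull ℝ (V : Set (Fin d → ℝ))).extremePoints ℝ ∧ y ≠ x ∧
      IsExtreme ℝ (convexHull ℝ (V : Set (Fin d → ℝ))) (segment ℝ x y) ∧ f y < f x := by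
  classical
  obtain ⟨g, hg⟩ := exists_pos_functional hx
  set T : Finset (Fin d → ℝ) := (V.erase x).image (fun v => (g (v - x))⁻¹ • (v - x)) with hT
  -- a point of the cross-section where f is negative
  have hv₁x : v₁ ≠ x := fun h => absurd hfv₁ (by rw [h]; exact lt_irrefl _)
  have hv₁e : v₁ ∈ V.erase x := Finset.mem_erase.2 ⟨hv₁x, hv₁⟩
  have hgw : 0 < g (v₁ - x) := hg _ hv₁e
  have hb₀T : (g (v₁ - x))⁻¹ • (v₁ - x) ∈ T := Finset.mem_image.2 ⟨v₁, hv₁e, rfl⟩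
  have hfb₀ : f ((g (v₁ - x))⁻¹ • (v₁ - x)) < 0 := by
    rw [map_smul, smul_eq_mul]
    apply mul_neg_of_pos_of_neg (inv_pos.2 hgw)
    rw [map_sub]
    linarith
  -- an extreme point of the cross-section where f is negative
  have hBcompact : IsCompact (convexHull ℝ (T : Set (Fin d → ℝ))) :=
    T.finite_toSet.isCompact_convexHull ℝ
  have hbex : ∃ b ∈ (convexHull ℝ (T : Set (Fin d → ℝ))).extremePoints ℝ, f b < 0 := by
    by_contra hcon
    push_neg at hcon
    have hsub : convexHull ℝ (T : Set (Fin d → ℝ)) ⊆ {y | 0 ≤ f y} := by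
      rw [← closure_convexHull_extremePoints hBcompact (convex_convexHull ℝ _)]
      refine closure_minimal (convexHull_min hcon ?_) ?_
      · exact convex_halfSpace_ge (f : (Fin d → ℝ) →ₗ[ℝ] ℝ).isLinear 0
      · exact isClosed_le continuous_const f.continuous
    have := hsub (subset_convexHull ℝ _ hb₀T)
    rw [Set.mem_setOf_eq] at this
    linarith
  obtain ⟨b, hbext, hfb⟩ := hbex
  have hbB : b ∈ convexHull ℝ (T : Set (Fin d → ℝ)) := hbext.1
  have hgb : g b = 1 := (crossSection_subset hg hbB).1
  have hbC : b ∈ coneAt V x := (crossSection_subset hg hbB).2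
  have hbT : b ∈ T := extremePoints_convexHull_subset hbext
  obtain ⟨v₀, hv₀e, hv₀b⟩ := Finset.mem_image.1 hbT
  -- the ray through b is an extreme subset of the cone
  set R : Set (Fin d → ℝ) := {c | ∃ t : ℝ, 0 ≤ t ∧ c = t • b} with hRdef
  have hRext : IsExtreme ℝ (coneAt V x) R := ray_isExtreme hg hgb hbext
  have hgR : ∀ c ∈ R, c = g c • b := by
    rintro c ⟨t, ht, rfl⟩
    rw [map_smul, smul_eq_mul, hgb, mul_one]
  -- pick the farthest generator on the ray
  set A : Finset (Fin d → ℝ) := V.filter (fun v => v - x ∈ R) with hA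
  have hv₀R : v₀ - x ∈ R := by
    refine ⟨g (v₀ - x), le_of_lt (hg _ hv₀e), ?_⟩
    rw [← hv₀b, smul_smul, mul_inv_cancel₀ (ne_of_gt (hg _ hv₀e)), one_smul]
  have hv₀A : v₀ ∈ A := Finset.mem_filter.2 ⟨Finset.mem_of_mem_erase hv₀e, hv₀R⟩
  obtain ⟨vs, hvsA, hvsmax⟩ := A.exists_max_image (fun v => g (v - x)) ⟨v₀, hv₀A⟩
  have hvsV : vs ∈ V := (Finset.mem_filter.1 hvsA).1
  have hvsR : vs - x ∈ R := (Finset.mem_filter.1 hvsA).2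
  have hts : 0 < g (vs - x) := lt_of_lt_of_le (hg _ hv₀e) (hvsmax v₀ hv₀A)
  set ts := g (vs - x) with htsdef
  have hvseq : vs - x = ts • b := hgR _ hvsR
  have hvsx : vs ≠ x := by
    intro h
    have h0 : ts = 0 := by rw [htsdef, h, sub_self, map_zero]
    exact hts.ne' h0
  -- every point of P on the ray lies on the segment [x, vs]
  have hPseg : ∀ p ∈ convexHull ℝ (V : Set (Fin d → ℝ)), p - x ∈ R → p ∈ segment ℝ x vs := by
    intro p hp hpR
    obtain ⟨w, hw0, hw1, hwrep⟩ := exists_rep hp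
    have hpz : (∑ v ∈ V, w v • (v - x)) ∈ R := by rw [hwrep x]; exact hpR
    have hgp0 : 0 ≤ g (p - x) := g_nonneg_on_cone hg _ (sub_mem_coneAt hp)
    have hgple : g (p - x) ≤ ts := by
      have h1 : g (p - x) = ∑ v ∈ V, w v * g (v - x) := by
        rw [← hwrep x, g_apply_cone hg]
      have h2 : ∀ v ∈ V, w v * g (v - x) ≤ w v * ts := by
        intro v hv
        rcases eq_or_ne (w v) 0 with h | h
        · rw [h, zero_mul, zero_mul]
        · have hvR : v - x ∈ R := support_in_ray hRext w hw0 hw1 hpz hv h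
          have hvA : v ∈ A := Finset.mem_filter.2 ⟨hv, hvR⟩
          exact mul_le_mul_of_nonneg_left (hvsmax v hvA) (hw0 v hv)
      calc g (p - x) = ∑ v ∈ V, w v * g (v - x) := h1
        _ ≤ ∑ v ∈ V, w v * ts := Finset.sum_le_sum h2
        _ = ts := by rw [← Finset.sum_mul, hw1, one_mul]
    have hpeq : p - x = g (p - x) • b := hgR _ hpR
    refine ⟨1 - g (p - x) / ts, g (p - x) / ts, by
        have : g (p - x) / ts ≤ 1 := by
          rw [div_le_one hts]; exact hgple
        linarith, div_nonneg hgp0 (le_of_lt hts), by ring, ?_⟩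
    have : (g (p - x) / ts) • (vs - x) = p - x := by
      rw [hvseq, smul_smul, div_mul_cancel₀ _ (ne_of_gt hts), ← hpeq]
    calc (1 - g (p - x) / ts) • x + (g (p - x) / ts) • vs
        = x + (g (p - x) / ts) • (vs - x) := by module
      _ = x + (p - x) := by rw [this]
      _ = p := by abel
  -- the segment [x, vs] is an edge of P
  have hxP : x ∈ convexHull ℝ (V : Set (Fin d → ℝ)) := hx.1
  have hvsP : vs ∈ convexHull ℝ (V : Set (Fin d → ℝ)) := subset_convexHull ℝ _ hvsV
  have hsegP : segment ℝ x vs ⊆ convexHull ℝ (V : Set (Fin d → ℝ)) :=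
    (convex_convexHull ℝ _).segment_subset hxP hvsP
  have hsegR : ∀ z ∈ segment ℝ x vs, z - x ∈ R := by
    rintro z ⟨a1, b1, ha1, hb1, hab1, rfl⟩
    refine ⟨b1 * ts, mul_nonneg hb1 (le_of_lt hts), ?_⟩
    have : a1 • x + b1 • vs - x = b1 • (vs - x) := by
      have hx1 : a1 = 1 - b1 := by linarith
      rw [hx1]; module
    rw [this, hvseq, smul_smul]
  have hEdge : IsExtreme ℝ (convexHull ℝ (V : Set (Fin d → ℝ))) (segment ℝ x vs) := by
    refine ⟨hsegP, ?_⟩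
    rintro p hp q hq z hz ⟨a, a', ha, ha', haa, heq⟩
    have hzR : z - x ∈ R := hsegR z hz
    have hzopen : z - x ∈ openSegment ℝ (p - x) (q - x) := by
      refine ⟨a, a', ha, ha', haa, ?_⟩
      calc a • (p - x) + a' • (q - x) = a • p + a' • q - (a + a') • x := by module
        _ = z - x := by rw [haa, one_smul, heq]
    have hpR := hRext.2 (sub_mem_coneAt hp) (sub_mem_coneAt hq) hzR hzopen
    exact hPseg p hp hpR
  -- conclude
  have hvsext : vs ∈ (convexHull ℝ (V : Set (Fin d → ℝ))).extremePoints ℝ :=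
    hEdge.extremePoints_subset_extremePoints
      (right_mem_extremePoints_segment (fun h => hvsx h.symm))
  have hflt : f vs < f x := by
    have : f (vs - x) = ts * f b := by rw [hvseq, map_smul, smul_eq_mul]
    rw [map_sub] at this
    nlinarith
  exact ⟨vs, hvsV, hvsext, hvsx, hEdge, hflt⟩

/-- Let `P` be a lattice `(d,k)`-polytope, `j` a coordinate index, `l` the minimum of
`x j` over `x ∈ P`, and `F = P ∩ {x : x j = l}`. Then every vertex `x` of `P`
satisfies `d(x,F) ≤ x j − l`. -/
theorem distToFace_le_coord (d k : ℕ) (P : Set (Fin d → ℝ))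
    (hP : IsLatticePolytope d k P) (j : Fin d) (l : ℝ)
    (hl : IsLeast {t : ℝ | ∃ x ∈ P, x j = t} l)
    (F : Set (Fin d → ℝ)) (hF : F = {x ∈ P | x j = l})
    (x : Fin d → ℝ) (hx : x ∈ P.extremePoints ℝ) :
    (distToFace P x F : ℝ) ≤ x j - l := by
  classical
  obtain ⟨V, hVint, hPeq⟩ := hP
  subst hPeq
  subst hF
  set P := convexHull ℝ (V : Set (Fin d → ℝ)) with hPdef
  set f : (Fin d → ℝ) →L[ℝ] ℝ := ContinuousLinearMap.proj j with hfdef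
  have hfapp : ∀ y : Fin d → ℝ, f y = y j := fun y => rfl
  -- every point of P has j-th coordinate at least l
  have hlP : ∀ p ∈ P, l ≤ p j := fun p hp => hl.2 ⟨p, hp, rfl⟩
  -- there is a vertex v₀ ∈ V with v₀ j = l
  obtain ⟨p, hpP, hpj⟩ := hl.1
  obtain ⟨w, hw0, hw1, hrep⟩ := exists_rep hpP
  have hrep0 : ∑ v ∈ V, w v • v = p := by
    have := hrep 0
    simpa using this
  have hpj' : ∑ v ∈ V, w v * v j = l := by
    have := congrFun hrep0 j
    rw [Finset.sum_apply] at this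
    simp only [Pi.smul_apply, smul_eq_mul] at this
    rw [this, hpj]
  obtain ⟨v₀, hv₀V, hv₀j⟩ : ∃ v₀ ∈ V, v₀ j = l := by
    by_contra hcon
    push_neg at hcon
    obtain ⟨v', hv'V, hv'w⟩ := Finset.exists_ne_zero_of_sum_ne_zero
      (hw1 ▸ one_ne_zero)
    have hv'pos : 0 < w v' := lt_of_le_of_ne (hw0 v' hv'V) (Ne.symm hv'w)
    have hv'l : l < v' j :=
      lt_of_le_of_ne (hlP v' (subset_convexHull ℝ _ hv'V)) (Ne.symm (hcon v' hv'V))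
    have hlt : ∑ v ∈ V, w v * l < ∑ v ∈ V, w v * v j := by
      refine Finset.sum_lt_sum (fun v hv => ?_) ⟨v', hv'V, ?_⟩
      · exact mul_le_mul_of_nonneg_left (hlP v (subset_convexHull ℝ _ hv)) (hw0 v hv)
      · exact mul_lt_mul_of_pos_left hv'l hv'pos
    rw [← Finset.sum_mul, hw1, one_mul, hpj'] at hlt
    exact lt_irrefl l hlt
  -- integrality
  obtain ⟨n₀, hn₀k, hn₀⟩ := hVint v₀ hv₀V j
  have hxV : x ∈ V := extremePoints_convexHull_subset hx
  obtain ⟨nx, hnxk, hnx⟩ := hVint x hxV j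
  have hlcast : l = (n₀ : ℝ) := by rw [← hv₀j, hn₀]
  have hn₀nx : n₀ ≤ nx := by
    have : l ≤ x j := hlP x hx.1
    rw [hlcast, hnx] at this
    exact_mod_cast this
  -- induction: from any vertex with j-th coordinate at most l + n there is a walk
  -- of length at most n to a vertex of F
  have key : ∀ n : ℕ, ∀ y : Fin d → ℝ, y ∈ P.extremePoints ℝ → y j ≤ l + n →
      ∃ v ∈ ({z ∈ P | z j = l} : Set (Fin d → ℝ)).extremePoints ℝ,
        ∃ wk : (polytopeGraph P).Walk y v, wk.length ≤ n := by
    intro n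
    induction n with
    | zero =>
      intro y hy hyj
      have hyP : y ∈ P := hy.1
      have hyj' : y j = l := le_antisymm (by simpa using hyj) (hlP y hyP)
      have hyF : y ∈ ({z ∈ P | z j = l} : Set (Fin d → ℝ)).extremePoints ℝ :=
        inter_extremePoints_subset_extremePoints_of_subset (Set.sep_subset _ _)
          ⟨⟨hyP, hyj'⟩, hy⟩
      exact ⟨y, hyF, SimpleGraph.Walk.nil, by simp⟩
    | succ n ih =>
      intro y hy hyj
      by_cases hcase : y j ≤ l + n
      · obtain ⟨v, hv, wk, hwk⟩ := ih y hy hcase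
        exact ⟨v, hv, wk, le_trans hwk (Nat.le_succ n)⟩
      · push_neg at hcase
        have hylt : l < y j := by
          have : (0 : ℝ) ≤ n := Nat.cast_nonneg n
          linarith
        have hfv₀ : f v₀ < f y := by
          rw [hfapp, hfapp, hv₀j]
          exact hylt
        obtain ⟨z, hzV, hzext, hzy, hzedge, hzlt⟩ :=
          exists_improving_neighbor V y hy f v₀ hv₀V hfv₀
        obtain ⟨nz, hnzk, hnz⟩ := hVint z hzV j
        obtain ⟨ny, hnyk, hny⟩ := hVint y (extremePoints_convexHull_subset hy) j
        have hnzny : nz < ny := by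
          rw [hfapp, hfapp, hnz, hny] at hzlt
          exact_mod_cast hzlt
        have hzj : z j ≤ l + n := by
          have h1 : (nz : ℝ) + 1 ≤ (ny : ℝ) := by exact_mod_cast hnzny
          rw [hnz]
          rw [hny] at hyj
          push_cast at hyj ⊢
          linarith
        obtain ⟨v, hv, wk, hwk⟩ := ih z hzext hzj
        have hadj : (polytopeGraph P).Adj y z := ⟨fun h => hzy h.symm, hy, hzext, hzedge⟩
        refine ⟨v, hv, SimpleGraph.Walk.cons hadj wk, ?_⟩
        rw [SimpleGraph.Walk.length_cons]
        exact Nat.succ_le_succ hwk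
  -- conclude
  have hxj : x j ≤ l + (nx - n₀ : ℕ) := by
    rw [hnx, hlcast]
    push_cast [Nat.cast_sub hn₀nx]
    linarith
  obtain ⟨v, hv, wk, hwk⟩ := key (nx - n₀) x hx hxj
  have hdist : (polytopeGraph P).dist x v ≤ (nx - n₀ : ℕ) :=
    le_trans (SimpleGraph.dist_le wk) hwk
  have hsInf : distToFace P x {z ∈ P | z j = l} ≤ (polytopeGraph P).dist x v :=
    Nat.sInf_le ⟨v, hv, rfl⟩
  have hle : (distToFace P x {z ∈ P | z j = l} : ℝ) ≤ ((nx - n₀ : ℕ) : ℝ) := by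
    exact_mod_cast le_trans hsInf hdist
  have hcast : ((nx - n₀ : ℕ) : ℝ) = x j - l := by
    rw [hnx, hlcast, Nat.cast_sub hn₀nx]
  linarith
end
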